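/- For every real ξ, the characteristic polynomial of the 4×4 complex matrix A(ξ) with rows (0, −iξ, 0, 0), (−iξ, −1, 0, 1), (0, 0, 0, −iξ), (0, 1, −iξ, −1−ξ²) equals λ⁴ + (ξ² + 2)λ³ + 3ξ²λ² + ξ²(ξ² + 2)λ + ξ⁴. -/

import Mathlib

set_option maxHeartbeats 1000000
open Polynomial Complex

lemma det_fin_four {R : Type*} [CommRing R] (a b c d e f g h i j k l m n o p : R) :
    Matrix.det !![a,b,c,d; e,f,g,h; i,j,k,l; m,n,o,p] =
      a*(f*(k*p - l*o) - g*(j*p - l*n) + h*(j*o - k*n))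
      - b*(e*(k*p - l*o) - g*(i*p - l*m) + h*(i*o - k*m))
      + c*(e*(j*p - l*n) - f*(i*p - l*m) + h*(i*n - j*m))
      - d*(e*(j*o - k*n) - f*(i*o - k*m) + g*(i*n - j*m)) := by
  simp [Matrix.det_succ_row_zero, Fin.sum_univ_succ, Fin.succAbove]
  ring

theorem stmt4 (ξ : ℝ) :
    let A : Matrix (Fin 4) (Fin 4) ℂ :=
      !![0, -I * (ξ : ℂ), 0, 0;
         -I * (ξ : ℂ), -1, 0, 1;
         0, 0, 0, -I * (ξ : ℂ);
         0, 1, -I * (ξ : ℂ), -1 - (ξ : ℂ) ^ 2]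
    A.charpoly =
      X ^ 4 + C ((ξ : ℂ) ^ 2 + 2) * X ^ 3 + C (3 * (ξ : ℂ) ^ 2) * X ^ 2
        + C ((ξ : ℂ) ^ 2 * ((ξ : ℂ) ^ 2 + 2)) * X + C ((ξ : ℂ) ^ 4) := by
  intro A
  have hcm : A.charmatrix =
      !![X, C (I * ξ), 0, 0;
         C (I * ξ), X + 1, 0, -1;
         0, 0, X, C (I * ξ);
         0, -1, C (I * ξ), X + C (1 + (ξ:ℂ)^2)] := by
    ext i j
    fin_cases i <;> fin_cases j <;>
      simp [A, Matrix.charmatrix_apply, Matrix.one_apply, Matrix.vecHead, Matrix.vecTail] <;>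
      push_cast <;> ring
  have hI : (C I : ℂ[X]) * C I = -1 := by
    rw [← C_mul, Complex.I_mul_I, map_neg, map_one]
  rw [Matrix.charpoly, hcm, det_fin_four]
  simp only [map_mul, map_add, map_pow, map_one, map_ofNat]
  ring_nf
  have h2 : (C I : ℂ[X])^2 = -1 := by rw [sq, hI]
  have h4 : (C I : ℂ[X])^4 = 1 := by rw [show ((C I:ℂ[X]))^4 = ((C I:ℂ[X])^2)^2 by ring, h2]; ring
  simp only [h2, h4]
  ring
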